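/- arXiv:math/0603553 — 4 statements merged into one kernel-verified Lean document; each statement's English description precedes it below -/
import Mathlib

section
/- Block Lemma: Let T be a measure-preserving transformation of a probability space (X, μ) and B a measurable set. Then for any natural numbers R, L, p with R, L ≥ 1, the integral of |(1/R) ∑_{j=0}^{R-1} χ_B ∘ T^{-j} − μ(B)| dμ is at most the integral of |(1/L) ∑_{j=0}^{L-1} χ_B ∘ T^{-jp} − μ(B)| dμ plus pL/R. -/
open MeasureTheory Filter Finset

private lemma shift_bound (a : ℕ → ℝ) (h0 : ∀ i, 0 ≤ a i) (h1 : ∀ i, a i ≤ 1)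
    (R k : ℕ) : |(∑ i ∈ Finset.range R, a i) - ∑ i ∈ Finset.range R, a (i + k)| ≤ k := by
  have key : ∀ s : Finset ℕ, (∑ i ∈ s, a i) ≤ (s.card : ℝ) := by
    intro s
    calc ∑ i ∈ s, a i ≤ ∑ i ∈ s, 1 := Finset.sum_le_sum fun i _ => h1 i
    _ = s.card := by simp
  have keynn : ∀ s : Finset ℕ, 0 ≤ ∑ i ∈ s, a i := fun s =>
    Finset.sum_nonneg fun i _ => h0 i
  have hs2 : ∑ i ∈ Finset.range R, a (i + k) = ∑ i ∈ Finset.Ico k (R + k), a i := by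
    rw [Finset.sum_Ico_eq_sum_range]
    simp [add_comm]
  rcases le_or_gt k R with hk | hk
  · have e1 : (∑ i ∈ Finset.Ico 0 k, a i) + ∑ i ∈ Finset.Ico k R, a i
        = ∑ i ∈ Finset.range R, a i := by
      rw [Finset.sum_Ico_consecutive _ (Nat.zero_le k) hk, Finset.range_eq_Ico]
    have e2 : (∑ i ∈ Finset.Ico k R, a i) + ∑ i ∈ Finset.Ico R (R + k), a i
        = ∑ i ∈ Finset.Ico k (R + k), a i :=
      Finset.sum_Ico_consecutive _ hk (Nat.le_add_right R k)
    have b1 := key (Finset.Ico 0 k)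
    have b2 := key (Finset.Ico R (R + k))
    have n1 := keynn (Finset.Ico 0 k)
    have n2 := keynn (Finset.Ico R (R + k))
    rw [Nat.card_Ico] at b1 b2
    simp only [Nat.sub_zero, Nat.add_sub_cancel_left] at b1 b2
    rw [hs2, abs_sub_le_iff]
    constructor <;> linarith
  · have b1 := key (Finset.range R)
    have b2 := key (Finset.Ico k (R + k))
    have n1 := keynn (Finset.range R)
    have n2 := keynn (Finset.Ico k (R + k))
    rw [Finset.card_range] at b1
    rw [Nat.card_Ico, Nat.add_sub_cancel] at b2
    have hRk : (R : ℝ) ≤ k := by exact_mod_cast hk.le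
    rw [hs2, abs_sub_le_iff]
    constructor <;> linarith

/-- **Block Lemma** (Adams). For a measure-preserving invertible transformation
(modeled as a measure-preserving ℤ-action `T`) of a probability space and a
measurable set `B`, the `L¹` ergodic average over `R` terms is controlled by the
average along the arithmetic progression with gap `p` over `L` terms, up to `pL/R`. -/
theorem block_lemma {X : Type*} [MeasurableSpace X] (μ : Measure X) [IsProbabilityMeasure μ]
    (T : ℤ → X → X) (hmp : ∀ n : ℤ, MeasurePreserving (T n) μ μ)
    (hadd : ∀ m n : ℤ, ∀ x : X, T (m + n) x = T m (T n x)) (hzero : ∀ x : X, T 0 x = x)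
    (B : Set X) (hB : MeasurableSet B) (R L p : ℕ) (hR : 1 ≤ R) (hL : 1 ≤ L) :
    ∫ x, |(1 / (R : ℝ)) * ∑ j ∈ Finset.range R, B.indicator (1 : X → ℝ) (T (-(j : ℤ)) x)
        - (μ B).toReal| ∂μ
      ≤ (∫ x, |(1 / (L : ℝ)) * ∑ j ∈ Finset.range L, B.indicator (1 : X → ℝ) (T (-((j : ℤ) * (p : ℤ))) x)
        - (μ B).toReal| ∂μ) + ((p : ℝ) * L) / R := by
  have hTmeas : ∀ n : ℤ, Measurable (T n) := fun n => (hmp n).measurable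
  set ind : X → ℝ := B.indicator (1 : X → ℝ) with hind
  have h0 : ∀ y, 0 ≤ ind y := fun y => Set.indicator_nonneg (fun _ _ => zero_le_one) y
  have h1 : ∀ y, ind y ≤ 1 := by
    intro y; by_cases h : y ∈ B <;> simp [hind, h]
  have hcompind : ∀ n : ℤ, (fun x => ind (T n x)) = (T n ⁻¹' B).indicator (1 : X → ℝ) := by
    intro n; funext x
    by_cases h : T n x ∈ B <;> simp [hind, Set.indicator_apply, h]
  have hint : ∀ n : ℤ, Integrable (fun x => ind (T n x)) μ := by
    intro n; rw [hcompind n]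
    exact (integrable_const (1 : ℝ)).indicator (hTmeas n hB)
  have emb : ∀ n : ℤ, MeasurableEmbedding (T n) := fun n =>
    (MeasurableEquiv.mk
      (Equiv.mk (T n) (T (-n))
        (fun x => by rw [← hadd]; simp [hzero])
        (fun x => by rw [← hadd]; simp [hzero]))
      (hTmeas n) (hTmeas (-n))).measurableEmbedding
  have hchg : ∀ (n : ℤ) (F : X → ℝ), ∫ x, F (T n x) ∂μ = ∫ x, F x ∂μ :=
    fun n F => (hmp n).integral_comp (emb n) F
  set c : ℝ := (μ B).toReal with hc
  set f : X → ℝ := fun x => ∑ i ∈ Finset.range R, ind (T (-(i : ℤ)) x) with hf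
  set g : X → ℝ := fun x => ∑ j ∈ Finset.range L, ind (T (-((j : ℤ) * (p : ℤ))) x) with hg
  set S : X → ℝ := fun x =>
    ∑ i ∈ Finset.range R, ∑ j ∈ Finset.range L, ind (T (-((i : ℤ) + (j : ℤ) * p)) x) with hS
  -- row and column identities
  have hcol : ∀ (x : X) (j : ℕ),
      (∑ i ∈ Finset.range R, ind (T (-((i : ℤ) + (j : ℤ) * p)) x))
        = f (T (-((j : ℤ) * p)) x) := by
    intro x j
    rw [hf]
    refine Finset.sum_congr rfl fun i _ => ?_
    have h : (-((i : ℤ) + (j : ℤ) * p)) = (-(i : ℤ)) + (-((j : ℤ) * p)) := by ring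
    rw [h, hadd]
  have hrow : ∀ (x : X) (i : ℕ),
      (∑ j ∈ Finset.range L, ind (T (-((i : ℤ) + (j : ℤ) * p)) x))
        = g (T (-(i : ℤ)) x) := by
    intro x i
    rw [hg]
    refine Finset.sum_congr rfl fun j _ => ?_
    have h : (-((i : ℤ) + (j : ℤ) * p)) = (-((j : ℤ) * p)) + (-(i : ℤ)) := by ring
    rw [h, hadd]
  -- integrabilities
  have hint_f : Integrable f μ := integrable_finset_sum _ fun i _ => hint _
  have hint_S : Integrable S μ :=
    integrable_finset_sum _ fun i _ => integrable_finset_sum _ fun j _ => hint _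
  have hint_gT : ∀ i : ℕ, Integrable (fun x => g (T (-(i : ℤ)) x)) μ := by
    intro i
    have : (fun x => g (T (-(i : ℤ)) x))
        = fun x => ∑ j ∈ Finset.range L, ind (T (-((i : ℤ) + (j : ℤ) * p)) x) := by
      funext x; rw [hrow]
    rw [this]
    exact integrable_finset_sum _ fun j _ => hint _
  have hRpos : (0 : ℝ) < R := by exact_mod_cast hR
  have hLpos : (0 : ℝ) < L := by exact_mod_cast hL
  -- pointwise bound 1
  have bound1 : ∀ x, |(1 / (R : ℝ)) * f x - (1 / ((R : ℝ) * L)) * S x| ≤ ((p : ℝ) * L) / R := by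
    intro x
    have hScol : S x = ∑ j ∈ Finset.range L, f (T (-((j : ℤ) * p)) x) :=
      calc S x = ∑ j ∈ Finset.range L, ∑ i ∈ Finset.range R,
            ind (T (-((i : ℤ) + (j : ℤ) * p)) x) := Finset.sum_comm
        _ = ∑ j ∈ Finset.range L, f (T (-((j : ℤ) * p)) x) :=
            Finset.sum_congr rfl fun j _ => hcol x j
    have key : (1 / (R : ℝ)) * f x - (1 / ((R : ℝ) * L)) * S x
        = (1 / ((R : ℝ) * L)) * ∑ j ∈ Finset.range L, (f x - f (T (-((j : ℤ) * p)) x)) := by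
      rw [Finset.sum_sub_distrib, Finset.sum_const, Finset.card_range, ← hScol]
      field_simp
      ring
    rw [key, abs_mul]
    have habs : |∑ j ∈ Finset.range L, (f x - f (T (-((j : ℤ) * p)) x))|
        ≤ ∑ j ∈ Finset.range L, ((L : ℝ) * p) := by
      refine (Finset.abs_sum_le_sum_abs _ _).trans (Finset.sum_le_sum fun j hj => ?_)
      have hfT : f (T (-((j : ℤ) * p)) x) = ∑ i ∈ Finset.range R,
          (fun k : ℕ => ind (T (-(k : ℤ)) x)) (i + j * p) := by
        rw [← hcol]
        refine Finset.sum_congr rfl fun i _ => ?_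
        norm_cast
      have hfx : f x = ∑ i ∈ Finset.range R, (fun k : ℕ => ind (T (-(k : ℤ)) x)) i := rfl
      rw [hfT, hfx]
      refine (shift_bound _ (fun k => h0 _) (fun k => h1 _) R (j * p)).trans ?_
      have : (j : ℝ) * p ≤ (L : ℝ) * p := by
        have hjL : (j : ℝ) ≤ L := by
          have := Finset.mem_range.mp hj
          exact_mod_cast this.le
        exact mul_le_mul_of_nonneg_right hjL (Nat.cast_nonneg p)
      push_cast
      linarith
    rw [Finset.sum_const, Finset.card_range, nsmul_eq_mul] at habs
    calc |1 / ((R : ℝ) * L)| * |∑ j ∈ Finset.range L, (f x - f (T (-((j : ℤ) * p)) x))|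
        ≤ (1 / ((R : ℝ) * L)) * ((L : ℝ) * ((L : ℝ) * p)) := by
          rw [abs_of_pos (by positivity)]
          exact mul_le_mul_of_nonneg_left habs (by positivity)
      _ = ((p : ℝ) * L) / R := by field_simp
  -- pointwise bound 2
  have bound2 : ∀ x, |(1 / ((R : ℝ) * L)) * S x - c|
      ≤ (1 / (R : ℝ)) * ∑ i ∈ Finset.range R, |(1 / (L : ℝ)) * g (T (-(i : ℤ)) x) - c| := by
    intro x
    have key : (1 / ((R : ℝ) * L)) * S x - c
        = (1 / (R : ℝ)) * ∑ i ∈ Finset.range R, ((1 / (L : ℝ)) * g (T (-(i : ℤ)) x) - c) := by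
      have hSrow : S x = ∑ i ∈ Finset.range R, g (T (-(i : ℤ)) x) := by
        rw [hS]
        exact Finset.sum_congr rfl fun i _ => hrow x i
      rw [hSrow, Finset.sum_sub_distrib, Finset.sum_const, Finset.card_range,
        nsmul_eq_mul, mul_sub, ← Finset.mul_sum]
      field_simp
      try ring
    rw [key, abs_mul, abs_of_pos (show (0:ℝ) < 1 / R by positivity)]
    exact mul_le_mul_of_nonneg_left (Finset.abs_sum_le_sum_abs _ _) (by positivity)
  -- integrable abs terms
  have hint1 : Integrable (fun x => |(1 / (R : ℝ)) * f x - (1 / ((R : ℝ) * L)) * S x|) μ :=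
    ((hint_f.const_mul _).sub (hint_S.const_mul _)).abs
  have hint2 : Integrable (fun x => |(1 / ((R : ℝ) * L)) * S x - c|) μ :=
    ((hint_S.const_mul _).sub (integrable_const c)).abs
  have hintL : Integrable (fun x => |(1 / (R : ℝ)) * f x - c|) μ :=
    ((hint_f.const_mul _).sub (integrable_const c)).abs
  have hint3 : ∀ i : ℕ, Integrable (fun x => |(1 / (L : ℝ)) * g (T (-(i : ℤ)) x) - c|) μ :=
    fun i => (((hint_gT i).const_mul _).sub (integrable_const c)).abs
  -- main chain
  have step1 : ∫ x, |(1 / (R : ℝ)) * f x - c| ∂μ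
      ≤ (∫ x, |(1 / (R : ℝ)) * f x - (1 / ((R : ℝ) * L)) * S x| ∂μ)
        + ∫ x, |(1 / ((R : ℝ) * L)) * S x - c| ∂μ := by
    rw [← integral_add hint1 hint2]
    exact integral_mono hintL (hint1.add hint2) fun x => abs_sub_le _ _ _
  have step2 : ∫ x, |(1 / (R : ℝ)) * f x - (1 / ((R : ℝ) * L)) * S x| ∂μ ≤ ((p : ℝ) * L) / R := by
    have := integral_mono hint1 (integrable_const (((p : ℝ) * L) / R)) bound1
    simpa using this
  have step3 : ∫ x, |(1 / ((R : ℝ) * L)) * S x - c| ∂μ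
      ≤ ∫ x, |(1 / (L : ℝ)) * g x - c| ∂μ := by
    have hmono : ∫ x, |(1 / ((R : ℝ) * L)) * S x - c| ∂μ
        ≤ ∫ x, (1 / (R : ℝ)) * ∑ i ∈ Finset.range R, |(1 / (L : ℝ)) * g (T (-(i : ℤ)) x) - c| ∂μ := by
      refine integral_mono hint2 ?_ bound2
      exact (integrable_finset_sum _ fun i _ => hint3 i).const_mul _
    refine hmono.trans ?_
    rw [integral_const_mul, integral_finset_sum _ fun i _ => hint3 i]
    have heach : ∀ i : ℕ, (∫ x, |(1 / (L : ℝ)) * g (T (-(i : ℤ)) x) - c| ∂μ)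
        = ∫ x, |(1 / (L : ℝ)) * g x - c| ∂μ := fun i =>
      hchg (-(i : ℤ)) (fun y => |(1 / (L : ℝ)) * g y - c|)
    rw [Finset.sum_congr rfl fun i _ => heach i, Finset.sum_const, Finset.card_range, nsmul_eq_mul]
    rw [← mul_assoc]
    rw [one_div, inv_mul_cancel₀ (ne_of_gt hRpos), one_mul]
  calc ∫ x, |(1 / (R : ℝ)) * f x - c| ∂μ
      ≤ (∫ x, |(1 / (R : ℝ)) * f x - (1 / ((R : ℝ) * L)) * S x| ∂μ)
        + ∫ x, |(1 / ((R : ℝ) * L)) * S x - c| ∂μ := step1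
    _ ≤ ((p : ℝ) * L) / R + ∫ x, |(1 / (L : ℝ)) * g x - c| ∂μ := add_le_add step2 step3
    _ = (∫ x, |(1 / (L : ℝ)) * g x - c| ∂μ) + ((p : ℝ) * L) / R := add_comm _ _
end

section
/- For the simple polynomial staircase transformation T_{D,δ} with spacers s_{n,j} = j^D and cuts r_n = ⌊h_n^{1/(D+δ)}⌋, where h_{n+1} = r_n h_n + ∑_{j=0}^{r_n−1} j^D and h_0 = 1, the series ∑_{n=0}^∞ (1/(r_n h_n)) ∑_{j=0}^{r_n−1} j^D converges, provided D ≥ 1 and δ > 0. (Hence T_{D,δ} is defined on a finite measure space.) -/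
open Finset

/-- For the simple polynomial staircase transformation `T_{D,δ}` with spacers
`s_{n,j} = j^D`, cuts `r n = ⌊(h n)^{1/(D+δ)}⌋` and heights
`h (n+1) = r n * h n + ∑_{j<r n} j^D` (with all `r n ≥ 2`), the series
`∑_n (1/(r_n h_n)) ∑_{j<r_n} j^D` converges; hence `T_{D,δ}` is defined on a
finite measure space. -/
theorem simple_polynomial_staircase_finite (D : ℕ) (hD : 1 ≤ D) (δ : ℝ) (hδ : 0 < δ)
    (h r : ℕ → ℕ)
    (hrdef : ∀ n, r n = ⌊(h n : ℝ) ^ (1 / ((D : ℝ) + δ))⌋₊)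
    (hrec : ∀ n, h (n + 1) = r n * h n + ∑ j ∈ Finset.range (r n), j ^ D)
    (hr2 : ∀ n, 2 ≤ r n) :
    Summable (fun n => (1 / ((r n : ℝ) * (h n : ℝ))) * ∑ j ∈ Finset.range (r n), (j : ℝ) ^ D) := by
  have hDδ : (0 : ℝ) < (D : ℝ) + δ := by positivity
  -- h is positive
  have hh0 : 0 < h 0 := by
    by_contra hc
    push_neg at hc
    interval_cases hh : h 0
    have hz : (1 / ((D:ℝ)+δ)) ≠ 0 := by positivity
    have := hrdef 0
    rw [hh, Nat.cast_zero, Real.zero_rpow hz] at this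
    have h2 := hr2 0
    rw [this] at h2
    simp at h2
  have hpos : ∀ n, 0 < h n := by
    intro n
    induction n with
    | zero => exact hh0
    | succ k ih =>
      have h1 := hrec k
      have h2 : 2 * h k ≤ r k * h k := Nat.mul_le_mul_right _ (hr2 k)
      omega
  -- h n ≥ 2^n
  have hgrow : ∀ n, 2 ^ n ≤ h n := by
    intro n
    induction n with
    | zero => simpa using Nat.succ_le_of_lt hh0
    | succ k ih =>
      have h1 := hrec k
      have h2 := hr2 k
      have h3 := hpos k
      calc 2 ^ (k+1) = 2 * 2 ^ k := by ring
        _ ≤ 2 * h k := by omega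
        _ ≤ r k * h k := Nat.mul_le_mul_right _ h2
        _ ≤ h (k+1) := by omega
  set e : ℝ := δ / ((D : ℝ) + δ) with he
  have hepos : 0 < e := by positivity
  have hbase : (0:ℝ) ≤ (2:ℝ) ^ (-e) := Real.rpow_nonneg (by norm_num) _
  have hbaselt : (2:ℝ) ^ (-e) < 1 :=
    Real.rpow_lt_one_of_one_lt_of_neg (by norm_num) (by linarith)
  refine Summable.of_nonneg_of_le ?_ ?_ (summable_geometric_of_lt_one hbase hbaselt)
  · intro n
    have h1 : (0:ℝ) < r n := by exact_mod_cast (hr2 n).trans_lt' (by norm_num)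
    have h2 : (0:ℝ) < h n := by exact_mod_cast hpos n
    positivity
  · intro n
    have h1 : (0:ℝ) < (r n : ℝ) := by
      have := hr2 n; positivity
    have h2 : (0:ℝ) < (h n : ℝ) := by exact_mod_cast hpos n
    have hrle : (r n : ℝ) ≤ (h n : ℝ) ^ (1 / ((D:ℝ)+δ)) := by
      rw [hrdef n]
      exact Nat.floor_le (Real.rpow_nonneg h2.le _)
    -- sum bound
    have hsum : (∑ j ∈ Finset.range (r n), (j : ℝ) ^ D) ≤ (r n : ℝ) * (r n : ℝ) ^ D := by
      calc (∑ j ∈ Finset.range (r n), (j : ℝ) ^ D)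
          ≤ ∑ _j ∈ Finset.range (r n), (r n : ℝ) ^ D := by
            apply Finset.sum_le_sum
            intro j hj
            exact pow_le_pow_left₀ (by positivity) (by exact_mod_cast (Finset.mem_range.mp hj).le) D
        _ = (r n : ℝ) * (r n : ℝ) ^ D := by
            rw [Finset.sum_const, Finset.card_range, nsmul_eq_mul]
    have step1 : (1 / ((r n : ℝ) * (h n : ℝ))) * ∑ j ∈ Finset.range (r n), (j : ℝ) ^ D
        ≤ (r n : ℝ) ^ D / (h n : ℝ) := by
      rw [div_mul_eq_mul_div, one_mul, div_le_div_iff₀ (by positivity) h2]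
      calc (∑ j ∈ Finset.range (r n), (j : ℝ) ^ D) * (h n : ℝ)
          ≤ ((r n : ℝ) * (r n : ℝ) ^ D) * (h n : ℝ) := by
            exact mul_le_mul_of_nonneg_right hsum h2.le
        _ = (r n : ℝ) ^ D * ((r n : ℝ) * (h n : ℝ)) := by ring
    have step2 : (r n : ℝ) ^ D ≤ (h n : ℝ) ^ ((D : ℝ) / ((D:ℝ)+δ)) := by
      calc (r n : ℝ) ^ D ≤ ((h n : ℝ) ^ (1 / ((D:ℝ)+δ))) ^ D :=
            pow_le_pow_left₀ h1.le hrle D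
        _ = (h n : ℝ) ^ ((D : ℝ) / ((D:ℝ)+δ)) := by
            rw [← Real.rpow_natCast ((h n : ℝ) ^ (1 / ((D:ℝ)+δ))) D,
              ← Real.rpow_mul h2.le]
            congr 1
            field_simp
    have harith : (D:ℝ)/((D:ℝ)+δ) - 1 = -e := by
      rw [he]
      field_simp
      ring
    have step3 : (r n : ℝ) ^ D / (h n : ℝ) ≤ (h n : ℝ) ^ (-e) := by
      have heq : (h n : ℝ) ^ (-e) = (h n : ℝ) ^ ((D : ℝ) / ((D:ℝ)+δ)) / (h n : ℝ) := by
        rw [← harith, Real.rpow_sub h2, Real.rpow_one]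
      rw [heq]
      gcongr
    have h2n : ((2:ℝ) ^ n : ℝ) ≤ (h n : ℝ) := by exact_mod_cast hgrow n
    have step4 : (h n : ℝ) ^ (-e) ≤ ((2:ℝ) ^ (-e)) ^ n := by
      calc (h n : ℝ) ^ (-e) ≤ ((2:ℝ) ^ n) ^ (-e) :=
            Real.rpow_le_rpow_of_nonpos (by positivity) h2n (by linarith)
        _ = ((2:ℝ) ^ (-e)) ^ n := by
            rw [← Real.rpow_natCast (2:ℝ) n, ← Real.rpow_mul (by norm_num), mul_comm,
              Real.rpow_mul (by norm_num), Real.rpow_natCast]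
    linarith
end

section
/- Let T be a rank-one transformation on a finite measure space with spacers {s_{n,j}}, cuts {r_n}, and heights {h_n}, and fix k ∈ ℕ. Then for every δ > 0, for all sufficiently large n, the set of j ∈ {0,...,r_n−k−1} with partial sum s_{n,j}^{(k)} := ∑_{z=0}^{k−1} s_{n,j+z} ≥ δ h_n has cardinality less than δ r_n. Equivalently, if there exists δ > 0 such that for infinitely many n at least δ r_n indices j satisfy s_{n,j}^{(k)} ≥ δ h_n, then ∑_n s̄_n/h_n = ∞ (so the space has infinite measure). -/
open Finset
open scoped Classical

/-- If for some `δ > 0` there are infinitely many stages `n` at which at least `δ r_n`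
indices `j ∈ {0,…,r_n−k−1}` have partial spacer sum `s_{n,j}^{(k)} = ∑_{z<k} s_{n,j+z}`
at least `δ h_n`, then `∑_n s̄_n/h_n = ∞` (the space has infinite measure). -/
theorem large_partial_sums_infinite_measure (r : ℕ → ℕ) (hr : ∀ n, 1 ≤ r n)
    (s : ℕ → ℕ → ℕ) (h : ℕ → ℕ) (h0 : h 0 = 1)
    (hrec : ∀ n, h (n + 1) = r n * h n + ∑ j ∈ Finset.range (r n), s n j)
    (k : ℕ) (δ : ℝ) (hδ : 0 < δ)
    (hinf : ∀ N : ℕ, ∃ n ≥ N, δ * (r n : ℝ) ≤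
        (((Finset.range (r n - k)).filter
          (fun j => δ * (h n : ℝ) ≤ ∑ z ∈ Finset.range k, (s n (j + z) : ℝ))).card : ℝ)) :
    ¬ Summable (fun n => ((∑ j ∈ Finset.range (r n), (s n j : ℝ)) / (r n : ℝ)) / (h n : ℝ)) := by
  intro hsum
  have hh : ∀ n, 1 ≤ h n := by
    intro n
    induction n with
    | zero => simp [h0]
    | succ n ih =>
      rw [hrec]
      have h1 : 1 * 1 ≤ r n * h n := Nat.mul_le_mul (hr n) ih
      omega
  -- dispose of the degenerate case k = 0
  rcases Nat.eq_zero_or_pos k with hk0 | hkpos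
  · obtain ⟨n, -, hn⟩ := hinf 0
    subst hk0
    have hhn : (0:ℝ) < h n := by exact_mod_cast hh n
    have : ((Finset.range (r n - 0)).filter
        (fun j => δ * (h n : ℝ) ≤ ∑ z ∈ Finset.range 0, (s n (j + z) : ℝ))) = ∅ := by
      apply Finset.filter_false_of_mem
      intro j _
      simp only [Finset.range_zero, Finset.sum_empty]
      nlinarith
    rw [this] at hn
    have hrn : (1:ℝ) ≤ r n := by exact_mod_cast hr n
    simp at hn
    nlinarith
  -- main case k ≥ 1
  have hkR : (0:ℝ) < k := by exact_mod_cast hkpos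
  set f := fun n => ((∑ j ∈ Finset.range (r n), (s n j : ℝ)) / (r n : ℝ)) / (h n : ℝ) with hf
  have key : ∀ n, δ * (r n : ℝ) ≤
      (((Finset.range (r n - k)).filter
        (fun j => δ * (h n : ℝ) ≤ ∑ z ∈ Finset.range k, (s n (j + z) : ℝ))).card : ℝ) →
      δ ^ 2 / k ≤ f n := by
    intro n hn
    set S := (Finset.range (r n - k)).filter
        (fun j => δ * (h n : ℝ) ≤ ∑ z ∈ Finset.range k, (s n (j + z) : ℝ)) with hS
    set T := ∑ j ∈ Finset.range (r n), (s n j : ℝ) with hT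
    have hhn : (0:ℝ) < h n := by exact_mod_cast hh n
    have hrn : (0:ℝ) < r n := by exact_mod_cast hr n
    have h1 : (S.card : ℝ) * (δ * (h n : ℝ)) ≤ ∑ j ∈ S, ∑ z ∈ Finset.range k, (s n (j + z) : ℝ) := by
      have := Finset.card_nsmul_le_sum S
        (fun j => ∑ z ∈ Finset.range k, (s n (j + z) : ℝ)) (δ * (h n : ℝ))
        (fun j hj => (Finset.mem_filter.mp hj).2)
      simpa [nsmul_eq_mul] using this
    have h2 : ∑ j ∈ S, ∑ z ∈ Finset.range k, (s n (j + z) : ℝ) ≤ (k : ℝ) * T := by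
      rw [Finset.sum_comm]
      have hz : ∀ z ∈ Finset.range k, ∑ j ∈ S, (s n (j + z) : ℝ) ≤ T := by
        intro z hz
        have hzk : z < k := Finset.mem_range.mp hz
        have hinj : ∑ j ∈ S, (s n (j + z) : ℝ) = ∑ i ∈ S.image (· + z), (s n i : ℝ) := by
          rw [Finset.sum_image]
          intro a _ b _ hab
          simp only at hab
          omega
        rw [hinj]
        apply Finset.sum_le_sum_of_subset_of_nonneg
        · intro i hi
          obtain ⟨j, hj, rfl⟩ := Finset.mem_image.mp hi
          have hj' : j < r n - k := Finset.mem_range.mp (Finset.mem_filter.mp hj).1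
          exact Finset.mem_range.mpr (by omega)
        · intro i _ _
          positivity
      calc ∑ z ∈ Finset.range k, ∑ j ∈ S, (s n (j + z) : ℝ)
          ≤ ∑ _z ∈ Finset.range k, T := Finset.sum_le_sum hz
        _ = (k : ℝ) * T := by simp [nsmul_eq_mul]
    have h3 : δ * (r n : ℝ) * (δ * (h n : ℝ)) ≤ (k : ℝ) * T := by
      have hδh : 0 < δ * (h n : ℝ) := by positivity
      nlinarith
    have : f n = T / ((r n : ℝ) * (h n : ℝ)) := by rw [hf]; simp [div_div, hT]
    rw [this, le_div_iff₀ (by positivity), div_mul_eq_mul_div, div_le_iff₀ hkR]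
    nlinarith
  have htend := hsum.tendsto_atTop_zero
  rw [Metric.tendsto_atTop] at htend
  obtain ⟨N, hN⟩ := htend (δ ^ 2 / k) (by positivity)
  obtain ⟨n, hnN, hn⟩ := hinf N
  have h4 := key n hn
  have h5 := hN n hnN
  rw [Real.dist_eq, sub_zero] at h5
  have := abs_lt.mp h5
  linarith [this.2]
end

section
/- If {q_n} and {n} are sequences with q_n/n → 0 and for every fixed ℓ ∈ {1,...,L−1} the sequence {ℓ k_n q_n} is mixing for T (μ(T^{ℓk_nq_n}(B) ∩ B) → μ(B)²), then limsup_n ∫|(1/n)∑_{j=0}^{n−1} χ_B ∘ T^{−jk_n} − μ(B)| dμ ≤ 2/√L + limsup error terms; letting L → ∞ the ergodic averages along jk_n tend to 0 in L¹. -/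
open MeasureTheory Filter Finset
open scoped ENNReal

private def Tequiv {X : Type*} [MeasurableSpace X] {μ : Measure X} {T : ℤ → X → X}
    (hmp : ∀ n : ℤ, MeasurePreserving (T n) μ μ)
    (hadd : ∀ m n : ℤ, ∀ x : X, T (m + n) x = T m (T n x)) (hzero : ∀ x : X, T 0 x = x)
    (n : ℤ) : X ≃ᵐ X where
  toFun := T n
  invFun := T (-n)
  left_inv x := by rw [← hadd]; simp [hzero]
  right_inv x := by rw [← hadd]; simp [hzero]
  measurable_toFun := (hmp n).measurable
  measurable_invFun := (hmp (-n)).measurable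

set_option maxHeartbeats 1000000 in
/-- Combining the Block Lemma with the Hölder/van der Corput estimate: if `q n / n → 0`
and for each fixed `ℓ ≥ 1` the sequence `{ℓ k_n q_n}` is mixing for `T`
(`μ(T^{ℓ k_n q_n}(B) ∩ B) → μ(B)²`), then the `L¹` ergodic averages along `j k_n`
tend to `0`. -/
theorem block_lemma_mixing_consequence {X : Type*} [MeasurableSpace X] (μ : Measure X)
    [IsProbabilityMeasure μ]
    (T : ℤ → X → X) (hmp : ∀ n : ℤ, MeasurePreserving (T n) μ μ)
    (hadd : ∀ m n : ℤ, ∀ x : X, T (m + n) x = T m (T n x)) (hzero : ∀ x : X, T 0 x = x)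
    (B : Set X) (hB : MeasurableSet B) (k q : ℕ → ℕ)
    (hq : Tendsto (fun n : ℕ => (q n : ℝ) / (n : ℝ)) atTop (nhds 0))
    (hmix : ∀ ℓ : ℕ, 1 ≤ ℓ →
      Tendsto (fun n : ℕ => (μ (T (-((ℓ * k n * q n : ℕ) : ℤ)) ⁻¹' B ∩ B)).toReal)
        atTop (nhds ((μ B).toReal ^ 2))) :
    Tendsto (fun n : ℕ => ∫ x, |(1 / (n : ℝ)) * ∑ j ∈ Finset.range n,
        B.indicator (1 : X → ℝ) (T (-((j * k n : ℕ) : ℤ)) x) - (μ B).toReal| ∂μ)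
      atTop (nhds 0) := by
  classical
  set b : ℝ := (μ B).toReal with hbdef
  set χ : X → ℝ := B.indicator (1 : X → ℝ) with hχdef
  have hb0 : 0 ≤ b := ENNReal.toReal_nonneg
  have hb1 : b ≤ 1 := by
    have : (μ B).toReal ≤ (1 : ℝ≥0∞).toReal :=
      ENNReal.toReal_mono ENNReal.one_ne_top prob_le_one
    simpa using this
  have hχ0 : ∀ x, 0 ≤ χ x := fun x => by by_cases h : x ∈ B <;> simp [hχdef, h]
  have hχ1 : ∀ x, χ x ≤ 1 := fun x => by by_cases h : x ∈ B <;> simp [hχdef, h]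
  have hχm : Measurable χ := measurable_const.indicator hB
  -- composition helpers
  have hTm : ∀ a : ℤ, Measurable (T a) := fun a => (hmp a).measurable
  have hemb : ∀ a : ℤ, MeasurableEmbedding (T a) := fun a =>
    (Tequiv hmp hadd hzero a).measurableEmbedding
  have hci : ∀ (a : ℤ) (g : X → ℝ), ∫ x, g (T a x) ∂μ = ∫ x, g x ∂μ := fun a g =>
    (hmp a).integral_comp (hemb a) g
  have hbint : ∀ (h : X → ℝ) (C : ℝ), Measurable h → (∀ x, |h x| ≤ C) → Integrable h μ :=
    fun h C hm hb => (integrable_const C).mono' hm.aestronglyMeasurable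
      (ae_of_all _ (by simpa [Real.norm_eq_abs] using hb))
  have hmeasχT : ∀ a : ℤ, Measurable fun x => χ (T a x) := fun a => hχm.comp (hTm a)
  have hintχT : ∀ a : ℤ, ∫ x, χ (T a x) ∂μ = b := by
    intro a
    rw [hci a χ, hχdef, integral_indicator_one hB]; rfl
  have habs1 : ∀ (a : ℤ) (x : X), |χ (T a x) - b| ≤ 1 := by
    intro a x
    have h1 := hχ0 (T a x); have h2 := hχ1 (T a x)
    rw [abs_le]; constructor <;> linarith
  -- correlation
  have hcorr : ∀ s t : ℤ, ∫ x, χ (T (s + t) x) * χ (T t x) ∂μ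
      = (μ (T s ⁻¹' B ∩ B)).toReal := by
    intro s t
    have hptw : ∀ x, χ (T (s + t) x) * χ (T t x)
        = ((T s ⁻¹' B ∩ B).indicator (1 : X → ℝ)) (T t x) := by
      intro x
      have h1 : T (s + t) x = T s (T t x) := hadd s t x
      rw [h1]
      by_cases hy1 : T s (T t x) ∈ B <;> by_cases hy2 : T t x ∈ B <;>
        simp [hχdef, Set.indicator, hy1, hy2, Set.mem_preimage]
    simp_rw [hptw]
    rw [hci t _, integral_indicator_one ((hTm s hB).inter hB)]; rfl
  -- expansion lemma
  have hexp : ∀ f g : X → ℝ, Measurable f → Measurable g → (∀ x, |f x| ≤ 1) →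
      (∀ x, |g x| ≤ 1) →
      ∫ x, (f x - b) * (g x - b) ∂μ
        = (∫ x, f x * g x ∂μ) - b * (∫ x, f x ∂μ) - b * (∫ x, g x ∂μ) + b ^ 2 := by
    intro f g hf hg hfb hgb
    have h1 : Integrable (fun x => f x * g x) μ := by
      refine hbint _ 1 (hf.mul hg) fun x => ?_
      rw [abs_mul]
      exact mul_le_one₀ (hfb x) (abs_nonneg _) (hgb x)
    have h2 : Integrable f μ := hbint _ 1 hf hfb
    have h3 : Integrable g μ := hbint _ 1 hg hgb
    calc ∫ x, (f x - b) * (g x - b) ∂μ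
        = ∫ x, (f x * g x - b * f x - (b * g x - b ^ 2)) ∂μ := by
          congr 1; funext x; ring
      _ = (∫ x, f x * g x ∂μ) - b * (∫ x, f x ∂μ) - b * (∫ x, g x ∂μ) + b ^ 2 := by
          rw [integral_sub
            (by exact h1.sub (h2.const_mul b) :
              Integrable (fun x => f x * g x - b * f x) μ)
            (by exact (h3.const_mul b).sub (integrable_const _) :
              Integrable (fun x => b * g x - b ^ 2) μ),
            integral_sub h1 (h2.const_mul b),
            integral_sub (h3.const_mul b) (integrable_const _)]
          simp only [integral_const_mul, integral_const]
          simp [measure_univ]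
          ring
  have hsq : ∀ (a : ℤ) (x : X), χ (T a x) * χ (T a x) = χ (T a x) := by
    intro a x
    by_cases h : T a x ∈ B <;> simp [hχdef, h]
  have hdiag : ∀ a : ℤ, ∫ x, (χ (T a x) - b) * (χ (T a x) - b) ∂μ = b - b ^ 2 := by
    intro a
    rw [hexp _ _ (hmeasχT a) (hmeasχT a) (fun x => by
        have := hχ0 (T a x); have := hχ1 (T a x); rw [abs_le]; constructor <;> linarith)
      (fun x => by
        have := hχ0 (T a x); have := hχ1 (T a x); rw [abs_le]; constructor <;> linarith)]
    simp_rw [hsq]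
    rw [hintχT a]
    ring
  have hoff : ∀ s t : ℤ, ∫ x, (χ (T (s + t) x) - b) * (χ (T t x) - b) ∂μ
      = (μ (T s ⁻¹' B ∩ B)).toReal - b ^ 2 := by
    intro s t
    rw [hexp _ _ (hmeasχT (s + t)) (hmeasχT t) (fun x => by
        have := hχ0 (T (s+t) x); have := hχ1 (T (s+t) x); rw [abs_le]; constructor <;> linarith)
      (fun x => by
        have := hχ0 (T t x); have := hχ1 (T t x); rw [abs_le]; constructor <;> linarith)]
    rw [hcorr s t, hintχT, hintχT]
    ring
  -- start the ε argument
  rw [Metric.tendsto_atTop]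
  intro ε hε
  set δ : ℝ := ε / 4 with hδdef
  have hδ0 : 0 < δ := by positivity
  set L : ℕ := max 1 ⌈1 / δ ^ 2⌉₊ with hLdef
  have hL1 : 1 ≤ L := le_max_left _ _
  have hLpos : (0 : ℝ) < L := by exact_mod_cast lt_of_lt_of_le one_pos hL1
  have hLδ : 1 / (L : ℝ) ≤ δ ^ 2 := by
    have h1 : (1 / δ ^ 2 : ℝ) ≤ L := by
      calc (1 / δ ^ 2 : ℝ) ≤ (⌈1 / δ ^ 2⌉₊ : ℝ) := Nat.le_ceil _
        _ ≤ (L : ℝ) := Nat.cast_le.mpr (le_max_right _ _)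
    rw [div_le_iff₀ hLpos]
    have hδ2 : (0:ℝ) < δ ^ 2 := by positivity
    calc (1:ℝ) = δ ^ 2 * (1 / δ ^ 2) := by field_simp
      _ ≤ δ ^ 2 * L := by apply mul_le_mul_of_nonneg_left h1 (le_of_lt hδ2)
  -- the block-average function
  set G : ℕ → X → ℝ := fun n x =>
    (1 / (L : ℝ)) * ∑ ℓ ∈ range L, (χ (T (-((ℓ * k n * q n : ℕ) : ℤ)) x) - b) with hGdef
  have hGmeas : ∀ n, Measurable (G n) := by
    intro n
    apply Measurable.const_mul
    exact Finset.measurable_sum _ fun ℓ _ => (hmeasχT _).sub measurable_const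
  have hGbd : ∀ n x, |G n x| ≤ 1 := by
    intro n x
    rw [hGdef]
    simp only
    rw [abs_mul, abs_of_nonneg (by positivity : (0:ℝ) ≤ 1 / (L:ℝ))]
    calc 1 / (L:ℝ) * |∑ ℓ ∈ range L, (χ (T (-((ℓ * k n * q n : ℕ) : ℤ)) x) - b)|
        ≤ 1 / (L:ℝ) * ∑ ℓ ∈ range L, |χ (T (-((ℓ * k n * q n : ℕ) : ℤ)) x) - b| := by
          apply mul_le_mul_of_nonneg_left (Finset.abs_sum_le_sum_abs _ _) (by positivity)
      _ ≤ 1 / (L:ℝ) * ((range L).card • (1:ℝ)) := by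
          apply mul_le_mul_of_nonneg_left
            (Finset.sum_le_card_nsmul _ _ 1 fun i _ => habs1 _ x) (by positivity)
      _ = 1 := by
          simp [card_range]
          field_simp
  -- convergence of the second moment
  have hJ : Tendsto (fun n => ∫ x, G n x * G n x ∂μ) atTop (nhds ((b - b ^ 2) / L)) := by
    have hJeq : ∀ n, ∫ x, G n x * G n x ∂μ
        = (1 / (L : ℝ)) ^ 2 * ∑ ℓ ∈ range L, ∑ m ∈ range L,
            ∫ x, (χ (T (-((ℓ * k n * q n : ℕ) : ℤ)) x) - b)
              * (χ (T (-((m * k n * q n : ℕ) : ℤ)) x) - b) ∂μ := by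
      intro n
      have hptw : ∀ x, G n x * G n x = (1 / (L : ℝ)) ^ 2 * ∑ ℓ ∈ range L, ∑ m ∈ range L,
          (χ (T (-((ℓ * k n * q n : ℕ) : ℤ)) x) - b)
            * (χ (T (-((m * k n * q n : ℕ) : ℤ)) x) - b) := by
        intro x
        rw [hGdef]
        simp only
        rw [show ∀ (c S : ℝ), (c * S) * (c * S) = c ^ 2 * (S * S) from fun c S => by ring,
          Finset.sum_mul_sum]
      simp_rw [hptw]
      rw [integral_const_mul]
      congr 1
      rw [integral_finset_sum _ fun ℓ _ => ?_]
      · exact Finset.sum_congr rfl fun ℓ _ => integral_finset_sum _ fun m _ => by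
          refine hbint _ 1 (((hmeasχT _).sub measurable_const).mul
            ((hmeasχT _).sub measurable_const)) fun x => ?_
          rw [abs_mul]
          exact mul_le_one₀ (habs1 _ x) (abs_nonneg _) (habs1 _ x)
      · apply integrable_finset_sum
        intro m _
        refine hbint _ 1 (((hmeasχT _).sub measurable_const).mul
          ((hmeasχT _).sub measurable_const)) fun x => ?_
        rw [abs_mul]
        exact mul_le_one₀ (habs1 _ x) (abs_nonneg _) (habs1 _ x)
    simp_rw [hJeq]
    have hlim : Tendsto (fun n => ∑ ℓ ∈ range L, ∑ m ∈ range L,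
        ∫ x, (χ (T (-((ℓ * k n * q n : ℕ) : ℤ)) x) - b)
          * (χ (T (-((m * k n * q n : ℕ) : ℤ)) x) - b) ∂μ) atTop
        (nhds (∑ ℓ ∈ range L, ∑ m ∈ range L, if ℓ = m then b - b ^ 2 else 0)) := by
      apply tendsto_finset_sum
      intro ℓ _
      apply tendsto_finset_sum
      intro m _
      rcases eq_or_ne ℓ m with h | h
      · subst h
        simp only [if_pos rfl]
        have : ∀ n, ∫ x, (χ (T (-((ℓ * k n * q n : ℕ) : ℤ)) x) - b)
            * (χ (T (-((ℓ * k n * q n : ℕ) : ℤ)) x) - b) ∂μ = b - b ^ 2 :=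
          fun n => hdiag _
        simp_rw [this]
        exact tendsto_const_nhds
      · simp only [if_neg h]
        -- wlog ℓ > m via symmetry
        have key : ∀ (ℓ m : ℕ), m < ℓ → Tendsto (fun n =>
            ∫ x, (χ (T (-((ℓ * k n * q n : ℕ) : ℤ)) x) - b)
              * (χ (T (-((m * k n * q n : ℕ) : ℤ)) x) - b) ∂μ) atTop (nhds 0) := by
          intro ℓ m hml
          have heq : ∀ n, ∫ x, (χ (T (-((ℓ * k n * q n : ℕ) : ℤ)) x) - b)
              * (χ (T (-((m * k n * q n : ℕ) : ℤ)) x) - b) ∂μ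
              = (μ (T (-(((ℓ - m) * k n * q n : ℕ) : ℤ)) ⁻¹' B ∩ B)).toReal - b ^ 2 := by
            intro n
            have hcast : (-((ℓ * k n * q n : ℕ) : ℤ))
                = (-(((ℓ - m) * k n * q n : ℕ) : ℤ)) + (-((m * k n * q n : ℕ) : ℤ)) := by
              push_cast [Nat.cast_sub hml.le]
              ring
            rw [show (fun x => (χ (T (-((ℓ * k n * q n : ℕ) : ℤ)) x) - b)
                * (χ (T (-((m * k n * q n : ℕ) : ℤ)) x) - b))
              = fun x => (χ (T ((-(((ℓ - m) * k n * q n : ℕ) : ℤ))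
                  + (-((m * k n * q n : ℕ) : ℤ))) x) - b)
                * (χ (T (-((m * k n * q n : ℕ) : ℤ)) x) - b) from by rw [← hcast]]
            exact hoff _ _
          simp_rw [heq]
          have := (hmix (ℓ - m) (by omega)).sub_const (b ^ 2)
          simpa using this
        rcases lt_or_gt_of_ne h with hlm | hml
        · have hsymm : ∀ n, ∫ x, (χ (T (-((ℓ * k n * q n : ℕ) : ℤ)) x) - b)
              * (χ (T (-((m * k n * q n : ℕ) : ℤ)) x) - b) ∂μ
              = ∫ x, (χ (T (-((m * k n * q n : ℕ) : ℤ)) x) - b)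
              * (χ (T (-((ℓ * k n * q n : ℕ) : ℤ)) x) - b) ∂μ := by
            intro n
            congr 1
            funext x
            ring
          simp_rw [hsymm]
          exact key m ℓ hlm
        · exact key ℓ m hml
    have hval : (∑ ℓ ∈ range L, ∑ m ∈ range L, if ℓ = m then b - b ^ 2 else 0)
        = (L : ℝ) * (b - b ^ 2) := by
      have : ∀ ℓ ∈ range L, (∑ m ∈ range L, if ℓ = m then b - b ^ 2 else 0) = b - b ^ 2 := by
        intro ℓ hℓ
        rw [Finset.sum_ite_eq]
        simp [hℓ]
      rw [Finset.sum_congr rfl this, Finset.sum_const, card_range, nsmul_eq_mul]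
    rw [hval] at hlim
    have := hlim.const_mul ((1 / (L : ℝ)) ^ 2)
    convert this using 2
    field_simp
  -- eventual bounds
  have hE3 : ∀ᶠ n in atTop, ∫ x, G n x * G n x ∂μ < 2 * δ ^ 2 := by
    apply hJ.eventually_lt_const
    have h1 : (b - b ^ 2) / (L:ℝ) ≤ 1 / (L:ℝ) := by
      gcongr
      nlinarith
    nlinarith
  have hE2 : ∀ᶠ n in atTop, 2 * (L : ℝ) * (q n) / n < δ := by
    have h := hq.const_mul (2 * (L : ℝ))
    rw [mul_zero] at h
    have h2 := h.eventually_lt_const hδ0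
    filter_upwards [h2] with n hn
    calc 2 * (L : ℝ) * (q n) / n = 2 * (L:ℝ) * ((q n : ℝ) / n) := by ring
      _ < δ := hn
  have hE4 : ∀ᶠ n in atTop, (L : ℝ) * (q n) / n < 1 := by
    have h := hq.const_mul ((L : ℝ))
    rw [mul_zero] at h
    have h2 := h.eventually_lt_const one_pos
    filter_upwards [h2] with n hn
    calc (L : ℝ) * (q n) / n = (L:ℝ) * ((q n : ℝ) / n) := by ring
      _ < 1 := hn
  have hE1 : ∀ᶠ n in atTop, 1 ≤ n := eventually_ge_atTop 1
  -- the L¹ bound for G via AM-GM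
  have hGsqint : ∀ n, Integrable (fun x => G n x * G n x) μ := fun n =>
    hbint _ 1 ((hGmeas n).mul (hGmeas n)) fun x => by
      rw [abs_mul]; exact mul_le_one₀ (hGbd n x) (abs_nonneg _) (hGbd n x)
  have hG1 : ∀ n, ∫ x, |G n x| ∂μ ≤ δ / 2 + (∫ x, G n x * G n x ∂μ) / (2 * δ) := by
    intro n
    have hptw : ∀ x, |G n x| ≤ δ / 2 + (G n x * G n x) / (2 * δ) := by
      intro x
      rw [div_add_div _ _ (by norm_num : (2:ℝ) ≠ 0) (by positivity : 2 * δ ≠ 0)]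
      rw [le_div_iff₀ (by positivity : (0:ℝ) < 2 * (2 * δ))]
      nlinarith [sq_nonneg (|G n x| - δ), sq_abs (G n x)]
    calc ∫ x, |G n x| ∂μ ≤ ∫ x, (δ / 2 + (G n x * G n x) / (2 * δ)) ∂μ := by
          apply integral_mono
            (hbint _ 1 (hGmeas n).abs fun x => by rw [abs_abs]; exact hGbd n x)
            ((integrable_const _).add ((hGsqint n).div_const _)) hptw
      _ = δ / 2 + (∫ x, G n x * G n x ∂μ) / (2 * δ) := by
          rw [integral_add (integrable_const _) ((hGsqint n).div_const _),
            integral_const, integral_div]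
          simp [measure_univ]
  -- the core block estimate
  have hcore : ∀ n : ℕ, 1 ≤ n → (L : ℝ) * (q n) < n →
      ∫ x, |(1 / (n : ℝ)) * ∑ j ∈ Finset.range n,
          χ (T (-((j * k n : ℕ) : ℤ)) x) - b| ∂μ
        ≤ (∫ x, |G n x| ∂μ) + 2 * (L : ℝ) * (q n) / n := by
    intro n hn1 hn2
    have hn0 : (0:ℝ) < n := by exact_mod_cast hn1
    have hnQ : L * q n < n := by exact_mod_cast hn2
    set K := k n with hK
    set Q := q n with hQ
    set SA : ℕ → X → ℝ := fun a x => χ (T (-(a : ℤ)) x) - b with hSA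
    -- rewrite integrand
    have ha : ∀ x, (1 / (n : ℝ)) * ∑ j ∈ Finset.range n,
        χ (T (-((j * K : ℕ) : ℤ)) x) - b
        = (1 / (n : ℝ)) * ∑ j ∈ Finset.range n, SA (j * K) x := by
      intro x
      rw [hSA]
      simp only
      rw [Finset.sum_sub_distrib, Finset.sum_const, card_range, nsmul_eq_mul]
      field_simp
    -- composition identity
    have hGcomp : ∀ (j : ℕ) (x : X), G n (T (-((j * K : ℕ) : ℤ)) x)
        = (1 / (L : ℝ)) * ∑ ℓ ∈ range L, SA (ℓ * K * Q + j * K) x := by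
      intro j x
      rw [hGdef, hSA]
      simp only
      congr 1
      apply Finset.sum_congr rfl
      intro ℓ _
      congr 2
      rw [← hadd]
      congr 1
      push_cast
      ring
    -- per-ℓ shift estimate
    have hshift : ∀ ℓ : ℕ, ℓ < L → ∀ x,
        |∑ j ∈ range n, SA (ℓ * K * Q + j * K) x - ∑ j ∈ range n, SA (j * K) x|
          ≤ 2 * (L : ℝ) * Q := by
      intro ℓ hℓ x
      set a := ℓ * Q with haa
      have haL : a ≤ L * Q := Nat.mul_le_mul_right Q hℓ.le
      have han : a ≤ n := le_trans haL hnQ.le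
      have hidx : ∀ j : ℕ, ℓ * K * Q + j * K = (a + j) * K := by
        intro j; rw [haa]; ring
      have h1 : ∑ j ∈ range n, SA (ℓ * K * Q + j * K) x
          = ∑ i ∈ Finset.Ico a (a + n), SA (i * K) x := by
        rw [Finset.sum_Ico_eq_sum_range]
        simp only [Nat.add_sub_cancel_left]
        exact (Finset.sum_congr rfl fun j _ => by rw [hidx j]).symm
      have h2 : ∑ j ∈ range n, SA (j * K) x = ∑ i ∈ Finset.Ico 0 n, SA (i * K) x := by
        rw [Finset.range_eq_Ico]
      have h3 : ∑ i ∈ Finset.Ico a (a + n), SA (i * K) x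
          = ∑ i ∈ Finset.Ico a n, SA (i * K) x + ∑ i ∈ Finset.Ico n (a + n), SA (i * K) x :=
        (Finset.sum_Ico_consecutive _ han (Nat.le_add_left n a)).symm
      have h4 : ∑ i ∈ Finset.Ico 0 n, SA (i * K) x
          = ∑ i ∈ Finset.Ico 0 a, SA (i * K) x + ∑ i ∈ Finset.Ico a n, SA (i * K) x :=
        (Finset.sum_Ico_consecutive _ (Nat.zero_le a) han).symm
      rw [h1, h2, h3, h4]
      have hbound : ∀ (s : Finset ℕ), |∑ i ∈ s, SA (i * K) x| ≤ (s.card : ℝ) := by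
        intro s
        calc |∑ i ∈ s, SA (i * K) x| ≤ ∑ i ∈ s, |SA (i * K) x| :=
              Finset.abs_sum_le_sum_abs _ _
          _ ≤ s.card • (1:ℝ) := Finset.sum_le_card_nsmul _ _ 1 fun i _ => habs1 _ x
          _ = (s.card : ℝ) := by rw [nsmul_eq_mul, mul_one]
      have hc1 := hbound (Finset.Ico n (a + n))
      have hc2 := hbound (Finset.Ico 0 a)
      rw [Nat.card_Ico] at hc1 hc2
      simp only [Nat.add_sub_cancel, Nat.sub_zero] at hc1 hc2
      have haR : (a : ℝ) ≤ (L : ℝ) * Q := by exact_mod_cast haL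
      calc |∑ i ∈ Finset.Ico a n, SA (i * K) x + ∑ i ∈ Finset.Ico n (a + n), SA (i * K) x
            - (∑ i ∈ Finset.Ico 0 a, SA (i * K) x + ∑ i ∈ Finset.Ico a n, SA (i * K) x)|
          = |∑ i ∈ Finset.Ico n (a + n), SA (i * K) x - ∑ i ∈ Finset.Ico 0 a, SA (i * K) x| := by
            congr 1; ring
        _ ≤ |∑ i ∈ Finset.Ico n (a + n), SA (i * K) x| + |∑ i ∈ Finset.Ico 0 a, SA (i * K) x| :=
            abs_sub _ _
        _ ≤ (a : ℝ) + (a : ℝ) := add_le_add hc1 hc2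
        _ ≤ 2 * (L : ℝ) * Q := by linarith
    -- combine into the block bound
    have hblock : ∀ x, |∑ j ∈ range n, SA (j * K) x
        - ∑ j ∈ range n, G n (T (-((j * K : ℕ) : ℤ)) x)| ≤ 2 * (L : ℝ) * Q := by
      intro x
      have hswap : ∑ j ∈ range n, G n (T (-((j * K : ℕ) : ℤ)) x)
          = (1 / (L : ℝ)) * ∑ ℓ ∈ range L, ∑ j ∈ range n, SA (ℓ * K * Q + j * K) x := by
        simp_rw [hGcomp]
        rw [← Finset.mul_sum, Finset.sum_comm]
      rw [hswap]
      have hdist : ∑ j ∈ range n, SA (j * K) x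
          - (1 / (L : ℝ)) * ∑ ℓ ∈ range L, ∑ j ∈ range n, SA (ℓ * K * Q + j * K) x
          = (1 / (L : ℝ)) * ∑ ℓ ∈ range L,
            (∑ j ∈ range n, SA (j * K) x - ∑ j ∈ range n, SA (ℓ * K * Q + j * K) x) := by
        rw [Finset.sum_sub_distrib (f := fun _ => ∑ j ∈ range n, SA (j * K) x), Finset.sum_const,
          card_range, nsmul_eq_mul]
        rw [mul_sub, ← mul_assoc, one_div_mul_cancel hLpos.ne', one_mul]
      rw [hdist, abs_mul, abs_of_nonneg (by positivity : (0:ℝ) ≤ 1 / (L:ℝ))]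
      calc 1 / (L:ℝ) * |∑ ℓ ∈ range L,
            (∑ j ∈ range n, SA (j * K) x - ∑ j ∈ range n, SA (ℓ * K * Q + j * K) x)|
          ≤ 1 / (L:ℝ) * ∑ ℓ ∈ range L,
            |∑ j ∈ range n, SA (j * K) x - ∑ j ∈ range n, SA (ℓ * K * Q + j * K) x| :=
            mul_le_mul_of_nonneg_left (Finset.abs_sum_le_sum_abs _ _) (by positivity)
        _ ≤ 1 / (L:ℝ) * ∑ ℓ ∈ range L, (2 * (L : ℝ) * Q) := by
            apply mul_le_mul_of_nonneg_left ?_ (by positivity)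
            apply Finset.sum_le_sum
            intro ℓ hℓ
            rw [abs_sub_comm]
            exact hshift ℓ (Finset.mem_range.mp hℓ) x
        _ = 2 * (L : ℝ) * Q := by
            rw [Finset.sum_const, card_range, nsmul_eq_mul]
            field_simp
    -- pointwise final estimate
    have hptfin : ∀ x, |(1 / (n : ℝ)) * ∑ j ∈ Finset.range n,
        χ (T (-((j * K : ℕ) : ℤ)) x) - b|
        ≤ (1 / (n : ℝ)) * ∑ j ∈ range n, |G n (T (-((j * K : ℕ) : ℤ)) x)|
          + 2 * (L : ℝ) * Q / n := by
      intro x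
      rw [ha x]
      have h5 : |∑ j ∈ range n, SA (j * K) x|
          ≤ |∑ j ∈ range n, G n (T (-((j * K : ℕ) : ℤ)) x)| + 2 * (L : ℝ) * Q := by
        have := hblock x
        have htri := abs_sub_abs_le_abs_sub (∑ j ∈ range n, SA (j * K) x)
          (∑ j ∈ range n, G n (T (-((j * K : ℕ) : ℤ)) x))
        linarith
      have h6 : |∑ j ∈ range n, G n (T (-((j * K : ℕ) : ℤ)) x)|
          ≤ ∑ j ∈ range n, |G n (T (-((j * K : ℕ) : ℤ)) x)| := Finset.abs_sum_le_sum_abs _ _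
      rw [abs_mul, abs_of_nonneg (by positivity : (0:ℝ) ≤ 1 / (n:ℝ))]
      calc 1 / (n:ℝ) * |∑ j ∈ range n, SA (j * K) x|
          ≤ 1 / (n:ℝ) * (∑ j ∈ range n, |G n (T (-((j * K : ℕ) : ℤ)) x)| + 2 * (L : ℝ) * Q) :=
            mul_le_mul_of_nonneg_left (le_trans h5 (by linarith)) (by positivity)
        _ = (1 / (n : ℝ)) * ∑ j ∈ range n, |G n (T (-((j * K : ℕ) : ℤ)) x)|
            + 2 * (L : ℝ) * Q / n := by rw [mul_add]; ring
    -- integrate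
    have hintL : Integrable (fun x => |(1 / (n : ℝ)) * ∑ j ∈ Finset.range n,
        χ (T (-((j * K : ℕ) : ℤ)) x) - b|) μ := by
      refine hbint _ (1 / (n:ℝ) * n + b) ?_ ?_
      · apply Measurable.abs
        apply Measurable.sub ?_ measurable_const
        exact (Finset.measurable_sum _ fun j _ => hmeasχT _).const_mul _
      · intro x
        rw [abs_abs]
        have h7 : |∑ j ∈ Finset.range n, χ (T (-((j * K : ℕ) : ℤ)) x)| ≤ (n:ℝ) := by
          calc |∑ j ∈ Finset.range n, χ (T (-((j * K : ℕ) : ℤ)) x)|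
              ≤ ∑ j ∈ Finset.range n, |χ (T (-((j * K : ℕ) : ℤ)) x)| :=
                Finset.abs_sum_le_sum_abs _ _
            _ ≤ (range n).card • (1:ℝ) := Finset.sum_le_card_nsmul _ _ 1 fun j _ => by
                rw [abs_of_nonneg (hχ0 _)]; exact hχ1 _
            _ = (n : ℝ) := by rw [card_range, nsmul_eq_mul, mul_one]
        calc |(1 / (n : ℝ)) * ∑ j ∈ Finset.range n, χ (T (-((j * K : ℕ) : ℤ)) x) - b|
            ≤ |(1 / (n : ℝ)) * ∑ j ∈ Finset.range n, χ (T (-((j * K : ℕ) : ℤ)) x)| + |b| :=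
              abs_sub _ _
          _ ≤ 1 / (n:ℝ) * n + b := by
              rw [abs_mul, abs_of_nonneg (by positivity : (0:ℝ) ≤ 1/(n:ℝ)),
                abs_of_nonneg hb0]
              have := mul_le_mul_of_nonneg_left h7 (by positivity : (0:ℝ) ≤ 1/(n:ℝ))
              linarith
    have hintGj : ∀ j : ℕ, Integrable (fun x => |G n (T (-((j * K : ℕ) : ℤ)) x)|) μ :=
      fun j => hbint _ 1 ((hGmeas n).comp (hTm _)).abs fun x => by
        rw [abs_abs]; exact hGbd n _
    have hintR : Integrable (fun x => (1 / (n : ℝ)) * ∑ j ∈ range n,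
        |G n (T (-((j * K : ℕ) : ℤ)) x)| + 2 * (L : ℝ) * Q / n) μ := by
      apply Integrable.add ?_ (integrable_const _)
      exact ((integrable_finset_sum _ fun j _ => hintGj j).const_mul _)
    calc ∫ x, |(1 / (n : ℝ)) * ∑ j ∈ Finset.range n, χ (T (-((j * K : ℕ) : ℤ)) x) - b| ∂μ
        ≤ ∫ x, ((1 / (n : ℝ)) * ∑ j ∈ range n, |G n (T (-((j * K : ℕ) : ℤ)) x)|
            + 2 * (L : ℝ) * Q / n) ∂μ := integral_mono hintL hintR hptfin
      _ = (1 / (n : ℝ)) * ∑ j ∈ range n, ∫ x, |G n (T (-((j * K : ℕ) : ℤ)) x)| ∂μ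
            + 2 * (L : ℝ) * Q / n := by
          rw [integral_add ((integrable_finset_sum _ fun j _ => hintGj j).const_mul _)
            (integrable_const _), integral_const_mul,
            integral_finset_sum _ fun j _ => hintGj j, integral_const]
          simp [measure_univ]
      _ = (∫ x, |G n x| ∂μ) + 2 * (L : ℝ) * Q / n := by
          have : ∀ j : ℕ, ∫ x, |G n (T (-((j * K : ℕ) : ℤ)) x)| ∂μ = ∫ x, |G n x| ∂μ :=
            fun j => hci _ fun y => |G n y|
          rw [Finset.sum_congr rfl fun j _ => this j, Finset.sum_const, card_range,
            nsmul_eq_mul, ← mul_assoc, one_div_mul_cancel (ne_of_gt hn0), one_mul]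
  -- final assembly
  have hbig : ∀ᶠ n : ℕ in atTop, ∫ x, |(1 / (n : ℝ)) * ∑ j ∈ Finset.range n,
      χ (T (-((j * k n : ℕ) : ℤ)) x) - b| ∂μ < ε := by
    filter_upwards [hE1, hE2, hE3, hE4] with n hn1 hn2 hn3 hn4
    have hn0 : (0:ℝ) < n := by exact_mod_cast hn1
    have hnQ : (L : ℝ) * (q n) < n := by
      have := (div_lt_one hn0).mp hn4
      linarith
    have h1 := hcore n hn1 hnQ
    have h2 := hG1 n
    have h3 : (∫ x, G n x * G n x ∂μ) / (2 * δ) < δ := by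
      rw [div_lt_iff₀ (by positivity : (0:ℝ) < 2 * δ)]
      nlinarith
    calc ∫ x, |(1 / (n : ℝ)) * ∑ j ∈ Finset.range n,
          χ (T (-((j * k n : ℕ) : ℤ)) x) - b| ∂μ
        ≤ (∫ x, |G n x| ∂μ) + 2 * (L : ℝ) * (q n) / n := h1
      _ ≤ δ / 2 + (∫ x, G n x * G n x ∂μ) / (2 * δ) + 2 * (L : ℝ) * (q n) / n := by linarith
      _ < δ / 2 + δ + δ := by linarith
      _ < ε := by rw [hδdef]; linarith
  obtain ⟨N, hN⟩ := eventually_atTop.mp hbig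
  refine ⟨N, fun n hn => ?_⟩
  rw [Real.dist_eq, sub_zero, abs_of_nonneg (integral_nonneg fun x => abs_nonneg _)]
  exact hN n hn
end
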